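/- Let z be an existential literal of Φ = Q₁x₁…Qₙxₙ F that is redundant, i.e., [{z̄}]_F ⊆ C_Φ(z), and suppose every literal in S_Φ(z) other than possibly z is existential with the variables of S_Φ(z) pairwise distinct. If the formula ρ_z(Φ) obtained by deleting the clauses C_Φ(z) from F (keeping the prefix on the remaining variables) is true, then Φ is true. -/

import Mathlib

/-- A quantifier. -/
inductive Quant | all | ex
deriving DecidableEq

/-- A literal: a variable together with a polarity. -/
abbrev Lit (V : Type*) := V × Bool

/-- A clause: a finite set of literals. -/
abbrev Clause (V : Type*) := Finset (Lit V)

/-- The assignment `v` satisfies the clause `C`. -/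
def satClause {V : Type*} (v : V → Bool) (C : Clause V) : Prop :=
  ∃ l ∈ C, v l.1 = l.2

/-- The assignment `v` satisfies the CNF matrix `F`. -/
def satCNF {V : Type*} (v : V → Bool) (F : Finset (Clause V)) : Prop :=
  ∀ C ∈ F, satClause v C

/-- Truth of the prenex QBF with prefix `p` and CNF matrix `F`, relative to
an ambient assignment `v` (irrelevant for closed formulas). -/
def qbfTrue {V : Type*} [DecidableEq V] :
    List (Quant × V) → (V → Bool) → Finset (Clause V) → Prop
  | [], v, F => satCNF v F
  | (Quant.all, x) :: p, v, F => ∀ b, qbfTrue p (Function.update v x b) F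
  | (Quant.ex, x) :: p, v, F => ∃ b, qbfTrue p (Function.update v x b) F

/-- Negation of a literal. -/
def Lit.neg {V : Type*} (l : Lit V) : Lit V := (l.1, !l.2)

/-- `[S]_F`: the set of clauses of `F` containing at least one literal of `S`. -/
def bracket {V : Type*} (F : Finset (Clause V)) (S : Set (Lit V)) : Set (Clause V) :=
  {C | C ∈ F ∧ ∃ l ∈ S, l ∈ C}

open scoped Classical in
/-- If `z` is a redundant existential literal (so `[{z̄}]_F ⊆ C_Φ(z) = [S]_F` where
`S = S_Φ(z)`), all literals of `S` are existential with pairwise distinct variables,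
every clause containing the negation of a literal of `S` lies in `C_Φ(z)`
(the fixed-point property of `S_Φ(z)`), and the formula `ρ_z(Φ)` obtained by deleting
the clauses `C_Φ(z)` is true, then `Φ` is true. -/
theorem redundant_elim_sound {V : Type*} [DecidableEq V]
    (p : List (Quant × V)) (F : Finset (Clause V)) (z : Lit V) (S : Set (Lit V))
    -- the prefix quantifies each variable at most once:
    (hnodup : (p.map Prod.snd).Nodup)
    -- the formula is closed:
    (hclosed : ∀ C ∈ F, ∀ l ∈ C, l.1 ∈ p.map Prod.snd)
    (hzS : z ∈ S)
    -- every literal of `S` is existential: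
    (hex : ∀ u ∈ S, (Quant.ex, u.1) ∈ p)
    -- the variables of `S` are pairwise distinct:
    (hdist : ∀ u ∈ S, ∀ w ∈ S, u.1 = w.1 → u = w)
    -- `z` is redundant: `[{z̄}]_F ⊆ C_Φ(z)`:
    (hred : bracket F {Lit.neg z} ⊆ bracket F S)
    -- fixed-point property of `S = S_Φ(z)`: `[{ū}]_F ⊆ C_Φ(z)` for every `u ∈ S`:
    (hneg : ∀ u ∈ S, bracket F {Lit.neg u} ⊆ bracket F S)
    (v : V → Bool)
    -- `ρ_z(Φ)` is true:
    (hρ : qbfTrue p v (F.filter (fun C => ¬ ∃ l ∈ S, l ∈ C))) :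
    qbfTrue p v F := by
  classical
  -- the override assignment: variables of `S` get the polarity of their literal in `S`
  set σ : (V → Bool) → V → Bool := fun w x =>
    if h : ∃ b, (x, b) ∈ S then h.choose else w x with hσ
  have fact1 : ∀ u ∈ S, ∀ w, σ w u.1 = u.2 := by
    intro u hu w
    have h : ∃ b, (u.1, b) ∈ S := ⟨u.2, hu⟩
    simp only [hσ, dif_pos h]
    exact congrArg Prod.snd (hdist _ h.choose_spec _ hu rfl)
  have fact2 : ∀ (w : V → Bool) (x : V), (¬ ∃ b, (x, b) ∈ S) → σ w x = w x := by
    intro w x h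
    simp only [hσ, dif_neg h]
  have fact3 : ∀ (w : V → Bool) (x : V) (b : Bool),
      σ (Function.update w x b)
        = Function.update (σ w) x (σ (Function.update w x b) x) := by
    intro w x b
    funext y
    rcases eq_or_ne y x with rfl | hne
    · simp
    · rw [Function.update_of_ne hne]
      simp only [hσ]
      split
      · rfl
      · rw [Function.update_of_ne hne]
  -- clauses of the reduced matrix mention no variable of `S`
  have hvarfree : ∀ C ∈ F, (¬ ∃ l ∈ S, l ∈ C) → ∀ l ∈ C, ¬ ∃ b, (l.1, b) ∈ S := by
    rintro C hC hCfree l hl ⟨b, hb⟩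
    by_cases hbe : b = l.2
    · exact hCfree ⟨l, by rwa [hbe] at hb, hl⟩
    · have hb' : b = !l.2 := by
        cases b <;> cases h : l.2 <;> simp_all
      have hlneg : l = Lit.neg (l.1, b) := by
        simp [Lit.neg, hb']
      have : C ∈ bracket F S := hneg (l.1, b) hb ⟨hC, ⟨l, Set.mem_singleton_iff.2 hlneg, hl⟩⟩
      exact hCfree this.2
  -- main induction
  have main : ∀ (q : List (Quant × V)), (∀ u ∈ S, (Quant.all, u.1) ∉ q) →
      ∀ w, qbfTrue q w (F.filter (fun C => ¬ ∃ l ∈ S, l ∈ C)) → qbfTrue q (σ w) F := by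
    intro q
    induction q with
    | nil =>
      intro _ w hw C hC
      by_cases hmem : ∃ l ∈ S, l ∈ C
      · obtain ⟨u, huS, huC⟩ := hmem
        exact ⟨u, huC, fact1 u huS w⟩
      · obtain ⟨l, hlC, hlv⟩ := hw C (Finset.mem_filter.2 ⟨hC, hmem⟩)
        exact ⟨l, hlC, by rw [fact2 w l.1 (hvarfree C hC hmem l hlC)]; exact hlv⟩
    | cons hd tl ih =>
      obtain ⟨q1, x⟩ := hd
      intro hall w hw
      have hall' : ∀ u ∈ S, (Quant.all, u.1) ∉ tl := fun u hu hm =>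
        hall u hu (List.mem_cons_of_mem _ hm)
      cases q1 with
      | all =>
        intro b
        have hx : ¬ ∃ b, (x, b) ∈ S := by
          rintro ⟨b', hb'⟩
          exact hall (x, b') hb' List.mem_cons_self
        have h := ih hall' (Function.update w x b) (hw b)
        rwa [fact3 w x b, fact2 (Function.update w x b) x hx,
          Function.update_self] at h
      | ex =>
        obtain ⟨b, hb⟩ := hw
        refine ⟨σ (Function.update w x b) x, ?_⟩
        have h := ih hall' (Function.update w x b) hb
        rwa [fact3 w x b] at h
  -- truth only depends on the values of free variables of F outside the prefix
  have hcongr : ∀ (q : List (Quant × V)) (w w' : V → Bool),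
      (∀ C ∈ F, ∀ l ∈ C, l.1 ∉ q.map Prod.snd → w l.1 = w' l.1) →
      qbfTrue q w F → qbfTrue q w' F := by
    intro q
    induction q with
    | nil =>
      intro w w' hagree h C hC
      obtain ⟨l, hl, hv⟩ := h C hC
      exact ⟨l, hl, by rw [← hagree C hC l hl (by simp)]; exact hv⟩
    | cons hd tl ih =>
      obtain ⟨q1, x⟩ := hd
      intro w w' hagree
      have key : ∀ (b : Bool), ∀ C ∈ F, ∀ l ∈ C, l.1 ∉ tl.map Prod.snd →
          Function.update w x b l.1 = Function.update w' x b l.1 := by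
        intro b C hC l hl hmem
        rcases eq_or_ne l.1 x with h | h
        · rw [h, Function.update_self, Function.update_self]
        · rw [Function.update_of_ne h, Function.update_of_ne h]
          exact hagree C hC l hl (by simp [hmem, h])
      cases q1 with
      | all => exact fun h b => ih _ _ (key b) (h b)
      | ex => exact fun ⟨b, hb⟩ => ⟨b, ih _ _ (key b) hb⟩
  -- no variable of S is universal in p
  have hall0 : ∀ u ∈ S, (Quant.all, u.1) ∉ p := by
    intro u hu hmem
    have := List.inj_on_of_nodup_map hnodup (hex u hu) hmem rfl
    exact Quant.noConfusion (congrArg Prod.fst this)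
  exact hcongr p (σ v) v
    (fun C hC l hl hm => absurd (hclosed C hC l hl) hm) (main p hall0 v hρ)
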